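/- Let φ : (0,∞) → [0,∞) be integrable and monotone decreasing. Then for every x > 0, |∫₀^∞ cos(ux) φ(u) du| ≤ ∫₀^{3π/(2x)} φ(u) du. -/

import Mathlib

open MeasureTheory Real Set

private lemma cos_sign_aux (k : ℕ) {t : ℝ} (h1 : π/2 + k*π < t) (h2 : t ≤ π/2 + (k+1)*π) :
    |Real.cos t| = (-1:ℝ)^(k+1) * Real.cos t := by
  set s : ℝ := t - (k+1)*π with hs
  have ht : t = s + ((k+1:ℕ):ℝ) * π := by push_cast [hs]; ring
  have hcs : Real.cos t = (-1:ℝ)^(k+1) * Real.cos s := by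
    rw [ht, Real.cos_add_nat_mul_pi]
  have hsmem : s ∈ Icc (-(π/2)) (π/2) := by
    constructor
    · have : π/2 + k*π - (k+1)*π = -(π/2) := by ring
      simp only [hs]; linarith
    · simp only [hs]; linarith
  have hcnn : 0 ≤ Real.cos s := Real.cos_nonneg_of_mem_Icc hsmem
  have hsq : ((-1:ℝ)^(k+1)) * ((-1:ℝ)^(k+1)) = 1 := by
    rw [← pow_add]; exact Even.neg_one_pow ⟨k+1, by ring⟩
  rw [hcs, abs_mul, abs_pow, abs_neg, abs_one, one_pow, one_mul, abs_of_nonneg hcnn,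
    ← mul_assoc, hsq, one_mul]

set_option maxHeartbeats 1000000 in
theorem smalltime_EqEsyEst2 (φ : ℝ → ℝ)
    (hpos : ∀ u ∈ Ioi (0:ℝ), 0 ≤ φ u)
    (hint : IntegrableOn φ (Ioi 0))
    (hanti : AntitoneOn φ (Ioi 0))
    (x : ℝ) (hx : 0 < x) :
    |∫ u in Ioi (0:ℝ), Real.cos (u * x) * φ u| ≤ ∫ u in Ioc (0:ℝ) (3 * π / (2 * x)), φ u := by
  have hπ := Real.pi_pos
  set c : ℝ := π / x with hc_def
  have hc : 0 < c := div_pos hπ hx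
  have hcx : c * x = π := by rw [hc_def]; field_simp
  set m : ℕ → ℝ := fun k => π / (2*x) + k * c with hm_def
  have hm0 : 0 < m 0 := by
    have h0 : m 0 = π / (2*x) := by norm_num [hm_def]
    rw [h0]; positivity
  have hmsucc : ∀ k, m (k+1) = m k + c := by
    intro k; simp only [hm_def, Nat.cast_add, Nat.cast_one]; ring
  have hmono : Monotone m := by
    intro a b hab
    simp only [hm_def]
    have : (a:ℝ) ≤ b := Nat.cast_le.2 hab
    nlinarith
  have hmlt : ∀ k, m k < m (k+1) := by intro k; rw [hmsucc]; linarith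
  have hmpos : ∀ k, 0 < m k := fun k => lt_of_lt_of_le hm0 (hmono (Nat.zero_le k))
  have hmx : ∀ k : ℕ, m k * x = π/2 + k * π := by
    intro k
    simp only [hm_def, hc_def]
    field_simp
  -- integrands
  set g : ℝ → ℝ := fun u => Real.cos (u*x) * φ u with hg_def
  set h : ℝ → ℝ := fun u => |Real.cos (u*x)| * φ u with hh_def
  have hg_int : IntegrableOn g (Ioi 0) := by
    apply hint.bdd_mul (c := 1)
    · exact (Real.continuous_cos.comp (continuous_id.mul continuous_const)).aestronglyMeasurable
    · exact Filter.Eventually.of_forall (fun u => by simpa using Real.abs_cos_le_one (u*x))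
  have hh_int : IntegrableOn h (Ioi 0) := by
    apply hint.bdd_mul (c := 1)
    · exact ((Real.continuous_cos.comp (continuous_id.mul continuous_const)).abs).aestronglyMeasurable
    · exact Filter.Eventually.of_forall (fun u => by simpa [abs_abs] using Real.abs_cos_le_one (u*x))
  -- interval pieces
  set B : ℕ → ℝ := fun k => ∫ u in Ioc (m k) (m (k+1)), h u with hB_def
  set J : ℕ → ℝ := fun k => ∫ u in Ioc (m k) (m (k+1)), g u with hJ_def
  have hIocsub : ∀ k, Ioc (m k) (m (k+1)) ⊆ Ioi (0:ℝ) := by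
    intro k u hu; exact lt_trans (hmpos k) hu.1
  have hφnn : ∀ k, ∀ u ∈ Ioc (m k) (m (k+1)), 0 ≤ φ u := fun k u hu => hpos u (hIocsub k hu)
  -- sign identity
  have hsign : ∀ k, J k = (-1:ℝ)^(k+1) * B k := by
    intro k
    have : ∀ u ∈ Ioc (m k) (m (k+1)), g u = (-1:ℝ)^(k+1) * h u := by
      intro u hu
      have h1 : π/2 + k*π < u * x := by
        have := mul_lt_mul_of_pos_right hu.1 hx
        rwa [hmx k] at this
      have h2 : u * x ≤ π/2 + (k+1)*π := by
        have := mul_le_mul_of_nonneg_right hu.2 hx.le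
        rw [hmx (k+1)] at this
        push_cast at this ⊢
        linarith
      have hsq : ((-1:ℝ)^(k+1)) * ((-1:ℝ)^(k+1)) = 1 := by
        rw [← pow_add]; exact Even.neg_one_pow ⟨k+1, by ring⟩
      simp only [hg_def, hh_def]
      rw [cos_sign_aux k h1 h2, ← mul_assoc, ← mul_assoc, hsq, one_mul]
    calc J k = ∫ u in Ioc (m k) (m (k+1)), (-1:ℝ)^(k+1) * h u :=
          setIntegral_congr_fun measurableSet_Ioc this
      _ = (-1:ℝ)^(k+1) * B k := by rw [hB_def]; exact integral_const_mul _ _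
  have hB_nonneg : ∀ k, 0 ≤ B k := by
    intro k
    apply setIntegral_nonneg measurableSet_Ioc
    intro u hu
    exact mul_nonneg (abs_nonneg _) (hφnn k u hu)
  -- B decreasing
  have hh_ii : ∀ k, IntervalIntegrable h volume (m k) (m (k+1))  := by
    intro k
    rw [intervalIntegrable_iff_integrableOn_Ioc_of_le (hmlt k).le]
    exact hh_int.mono_set (hIocsub k)
  have hB_interval : ∀ k, B k = ∫ u in (m k)..(m (k+1)), h u := by
    intro k; rw [intervalIntegral.integral_of_le (hmlt k).le]
  have hB_mono : ∀ k, B (k+1) ≤ B k := by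
    intro k
    rw [hB_interval, hB_interval]
    have hshift : (∫ u in (m (k+1))..(m (k+2)), h u) = ∫ u in (m k)..(m (k+1)), h (u + c) := by
      rw [intervalIntegral.integral_comp_add_right, hmsucc (k+1), hmsucc k]
    rw [hshift]
    have hle : ∀ u ∈ Icc (m k) (m (k+1)), h (u + c) ≤ h u := by
      intro u hu
      have hu0 : 0 < u := lt_of_lt_of_le (hmpos k) hu.1
      have habs : |Real.cos ((u + c) * x)| = |Real.cos (u * x)| := by
        have : (u + c) * x = u * x + π := by rw [add_mul, hcx]
        rw [this, Real.cos_add_pi, abs_neg]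
      simp only [hh_def]
      rw [habs]
      apply mul_le_mul_of_nonneg_left _ (abs_nonneg _)
      exact hanti hu0 (by simp only [mem_Ioi]; linarith : u + c ∈ Ioi (0:ℝ)) (by linarith)
    have hii2 : IntervalIntegrable (fun u => h (u + c)) volume (m k) (m (k+1)) := by
      have h2 := (hh_ii (k+1)).comp_add_right c
      have e1 : m (k+1) - c = m k := by rw [hmsucc]; ring
      have e2 : m (k+1+1) - c = m (k+1) := by rw [hmsucc (k+1)]; ring
      rwa [e1, e2] at h2
    exact intervalIntegral.integral_mono_on (hmlt k).le hii2 (hh_ii k) hle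
  -- union decomposition of Ioi (m 0)
  have hunion : (⋃ k : ℕ, Ioc (m k) (m (k+1))) = Ioi (m 0) := by
    ext u
    simp only [mem_iUnion, mem_Ioc, mem_Ioi]
    constructor
    · rintro ⟨k, hk1, _⟩; exact lt_of_le_of_lt (hmono (Nat.zero_le k)) hk1
    · intro hu
      have hex : ∃ n, u ≤ m n := by
        obtain ⟨n, hn⟩ := exists_nat_ge ((u - m 0)/c)
        refine ⟨n, ?_⟩
        have := (div_le_iff₀ hc).1 hn
        simp only [hm_def] at *
        linarith
      classical
      let n₀ := Nat.find hex
      have hn₀ : u ≤ m n₀ := Nat.find_spec hex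
      have hn₀pos : n₀ ≠ 0 := by
        intro h0
        have := hn₀
        rw [h0] at this
        linarith
      obtain ⟨j, hj⟩ := Nat.exists_eq_succ_of_ne_zero hn₀pos
      refine ⟨j, ?_, by rw [hj] at hn₀; exact hn₀⟩
      by_contra hcon
      push_neg at hcon
      exact Nat.find_min hex (by omega : j < n₀) hcon
  have hdisj : Pairwise (Function.onFun Disjoint (fun k : ℕ => Ioc (m k) (m (k+1)))) := by
    intro i j hij
    rw [Function.onFun, Set.Ioc_disjoint_Ioc]
    rcases hij.lt_or_gt with hlt | hlt
    · calc min (m (i+1)) (m (j+1)) ≤ m (i+1) := min_le_left _ _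
        _ ≤ m j := hmono hlt
        _ ≤ max (m i) (m j) := le_max_right _ _
    · calc min (m (i+1)) (m (j+1)) ≤ m (j+1) := min_le_right _ _
        _ ≤ m i := hmono hlt
        _ ≤ max (m i) (m j) := le_max_left _ _
  have hIoisub : Ioi (m 0) ⊆ Ioi (0:ℝ) := Ioi_subset_Ioi (hmpos 0).le
  have hJ_hasSum : HasSum J (∫ u in Ioi (m 0), g u) := by
    rw [← hunion]
    exact hasSum_integral_iUnion (fun k => measurableSet_Ioc) hdisj
      (by rw [hunion]; exact hg_int.mono_set hIoisub)
  have hJ_summable : Summable J := hJ_hasSum.summable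
  -- bounds on S = tsum J
  set S : ℝ := ∫ u in Ioi (m 0), g u with hS_def
  have hS_tsum : S = ∑' k, J k := hJ_hasSum.tsum_eq.symm
  have hpow_odd : ∀ j : ℕ, (-1:ℝ)^(2*j+1) = -1 := fun j => Odd.neg_one_pow ⟨j, by ring⟩
  have hpow_even : ∀ j : ℕ, (-1:ℝ)^(2*j+2) = 1 := fun j => Even.neg_one_pow ⟨j+1, by ring⟩
  have hJ_even : ∀ j : ℕ, J (2*j) = -(B (2*j)) := by
    intro j; rw [hsign, hpow_odd]; ring
  have hJ_odd : ∀ j : ℕ, J (2*j+1) = B (2*j+1) := by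
    intro j
    rw [hsign]
    have : (-1:ℝ)^(2*j+1+1) = 1 := hpow_even j
    rw [this, one_mul]
  have hsum_even : Summable (fun j => J (2*j)) :=
    hJ_summable.comp_injective (fun a b hab => by omega)
  have hsum_odd : Summable (fun j => J (2*j+1)) :=
    hJ_summable.comp_injective (fun a b hab => by omega)
  have hS_le : S ≤ 0 := by
    rw [hS_tsum, ← tsum_even_add_odd hsum_even hsum_odd, ← Summable.tsum_add hsum_even hsum_odd]
    apply tsum_nonpos
    intro j
    rw [hJ_even, hJ_odd]
    have := hB_mono (2*j)
    linarith
  have hS_ge : -(B 0) ≤ S := by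
    have hshift : Summable (fun k => J (k+1)) := hJ_summable.comp_injective (fun a b hab => by omega)
    have hse : Summable (fun j => J (2*j+1)) := hsum_odd
    have hso : Summable (fun j => J (2*j+1+1)) :=
      hJ_summable.comp_injective (fun a b hab => by omega)
    have htail : 0 ≤ ∑' k, J (k+1) := by
      rw [← tsum_even_add_odd (f := fun n => J (n+1)) hse hso, ← Summable.tsum_add hse hso]
      apply tsum_nonneg
      intro j
      rw [hJ_odd]
      have h2 : J (2*j+1+1) = -(B (2*(j+1))) := by
        have : 2*j+1+1 = 2*(j+1) := by ring
        rw [this, hJ_even]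
      rw [h2]
      have := hB_mono (2*j+1)
      have : B (2*(j+1)) ≤ B (2*j+1) := by
        have h3 : 2*(j+1) = 2*j+1+1 := by ring
        rw [h3]; exact hB_mono (2*j+1)
      linarith
    have hJ0 : J 0 = -(B 0) := by
      rw [hsign]; norm_num
    rw [hS_tsum, Summable.tsum_eq_zero_add hJ_summable, hJ0]
    linarith
  -- split the full integral
  have hsplit : (∫ u in Ioi (0:ℝ), g u) = (∫ u in Ioc 0 (m 0), g u) + S := by
    rw [hS_def, ← setIntegral_union (Set.Ioc_disjoint_Ioi le_rfl) measurableSet_Ioi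
      (hg_int.mono_set Ioc_subset_Ioi_self) (hg_int.mono_set hIoisub),
      Set.Ioc_union_Ioi_eq_Ioi (hmpos 0).le]
  set I₀ : ℝ := ∫ u in Ioc 0 (m 0), g u with hI0_def
  have hI0_nonneg : 0 ≤ I₀ := by
    apply setIntegral_nonneg measurableSet_Ioc
    intro u hu
    have hux1 : 0 < u * x := mul_pos hu.1 hx
    have hux2 : u * x ≤ π/2 := by
      have := mul_le_mul_of_nonneg_right hu.2 hx.le
      rw [hmx 0] at this
      simpa using this
    exact mul_nonneg (Real.cos_nonneg_of_mem_Icc ⟨by linarith, hux2⟩) (hpos u hu.1)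
  have hI0_le : I₀ ≤ ∫ u in Ioc 0 (m 0), φ u := by
    apply setIntegral_mono_on (hg_int.mono_set Ioc_subset_Ioi_self)
      (hint.mono_set Ioc_subset_Ioi_self) measurableSet_Ioc
    intro u hu
    have : Real.cos (u*x) ≤ 1 := Real.cos_le_one _
    have hφu := hpos u hu.1
    calc g u = Real.cos (u*x) * φ u := rfl
      _ ≤ 1 * φ u := mul_le_mul_of_nonneg_right this hφu
      _ = φ u := one_mul _
  have hB0_le : B 0 ≤ ∫ u in Ioc (m 0) (m 1), φ u := by
    apply setIntegral_mono_on (hh_int.mono_set (hIocsub 0))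
      (hint.mono_set (hIocsub 0)) measurableSet_Ioc
    intro u hu
    have : |Real.cos (u*x)| ≤ 1 := Real.abs_cos_le_one _
    have hφu := hφnn 0 u hu
    calc h u = |Real.cos (u*x)| * φ u := rfl
      _ ≤ 1 * φ u := mul_le_mul_of_nonneg_right this hφu
      _ = φ u := one_mul _
  -- target
  have hm1 : m 1 = 3 * π / (2 * x) := by
    simp only [hm_def, hc_def, Nat.cast_one]
    field_simp
    ring
  have hφae : 0 ≤ᵐ[volume.restrict (Ioc (0:ℝ) (m 1))] φ := by
    filter_upwards [ae_restrict_mem measurableSet_Ioc] with u hu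
    exact hpos u hu.1
  have hT_int : IntegrableOn φ (Ioc 0 (m 1)) := hint.mono_set Ioc_subset_Ioi_self
  have hsub1 : (∫ u in Ioc 0 (m 0), φ u) ≤ ∫ u in Ioc 0 (m 1), φ u := by
    apply setIntegral_mono_set hT_int hφae
    exact HasSubset.Subset.eventuallyLE (Ioc_subset_Ioc_right (hmono (by norm_num : (0:ℕ) ≤ 1)))
  have hsub2 : (∫ u in Ioc (m 0) (m 1), φ u) ≤ ∫ u in Ioc 0 (m 1), φ u := by
    apply setIntegral_mono_set hT_int hφae
    exact HasSubset.Subset.eventuallyLE (Ioc_subset_Ioc_left (hmpos 0).le)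
  rw [← hm1]
  rw [abs_le]
  constructor
  · -- lower bound
    have : (∫ u in Ioi (0:ℝ), g u) ≥ I₀ - B 0 := by rw [hsplit]; linarith
    have h2 : I₀ - B 0 ≥ -(∫ u in Ioc 0 (m 1), φ u) := by
      have := hB0_le
      linarith [hsub2, hI0_nonneg]
    calc -(∫ u in Ioc 0 (m 1), φ u) ≤ I₀ - B 0 := h2
      _ ≤ ∫ u in Ioi (0:ℝ), g u := this
      _ = ∫ u in Ioi (0:ℝ), Real.cos (u * x) * φ u := rfl
  · calc (∫ u in Ioi (0:ℝ), Real.cos (u * x) * φ u) = I₀ + S := hsplit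
      _ ≤ I₀ := by linarith
      _ ≤ ∫ u in Ioc 0 (m 0), φ u := hI0_le
      _ ≤ ∫ u in Ioc 0 (m 1), φ u := hsub1
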